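/- Let δ > d ≥ 1, γ ≥ 0, and define the sequence of maps Φₙ = F₀^{−n} ∘ Fⁿ where F₀(Z,W) = (δZ, γZ + dW) and F = F₀ + G with ‖G‖ := sup ‖F − F₀‖ < ε̃ on an F-invariant set S. Then for all n and all points of S, ‖Φ_{n+1} − Φₙ‖ ≤ max{ ε̃/δ^{n+1}, ε̃/d^{n+1} + γ_{n+1} ε̃/(δ^{n+1} d^{n+1}) }, where γ_n = Σ_{j=1}^n δ^{n−j} d^{j−1} γ. In particular, if d ≥ 2, the sequence (Φₙ) is uniformly Cauchy on S. -/

import Mathlib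

noncomputable section

/-- `γ_n = Σ_{j=1}^n δ^{n−j} d^{j−1} γ`. -/
def gammaSeq (δ d γ : ℕ) (n : ℕ) : ℕ :=
  ∑ j ∈ Finset.range n, δ ^ (n - 1 - j) * d ^ j * γ

/-- `Φₙ = F₀^{−n} ∘ Fⁿ`, where `F₀(Z,W) = (δZ, γZ + dW)`, so that
`F₀^{−n}(Z,W) = (Z/δⁿ, W/dⁿ − γ_n Z/(δⁿ dⁿ))`. -/
def Phi (δ d γ : ℕ) (F : ℂ × ℂ → ℂ × ℂ) (n : ℕ) (p : ℂ × ℂ) : ℂ × ℂ :=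
  ((F^[n] p).1 / (δ : ℂ) ^ n,
    (F^[n] p).2 / (d : ℂ) ^ n -
      (gammaSeq δ d γ n : ℂ) * (F^[n] p).1 / ((δ : ℂ) ^ n * (d : ℂ) ^ n))

lemma gammaSeq_succ (δ d γ n : ℕ) :
    gammaSeq δ d γ (n+1) = d * gammaSeq δ d γ n + δ ^ n * γ := by
  unfold gammaSeq
  rw [Finset.sum_range_succ', Finset.mul_sum]
  simp only [Nat.add_sub_cancel, Nat.sub_zero, pow_zero, mul_one, pow_succ]
  congr 1
  apply Finset.sum_congr rfl
  intro j hj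
  have hj' : j < n := Finset.mem_range.mp hj
  have : n - (j+1) = n - 1 - j := by omega
  rw [this]
  ring

lemma gammaSeq_le (δ d γ n : ℕ) (h : d ≤ δ) (h1 : 1 ≤ δ) :
    gammaSeq δ d γ n ≤ n * δ ^ (n-1) * γ := by
  unfold gammaSeq
  calc ∑ j ∈ Finset.range n, δ ^ (n - 1 - j) * d ^ j * γ
      ≤ ∑ _j ∈ Finset.range n, δ ^ (n-1) * γ := by
        apply Finset.sum_le_sum
        intro j hj
        have hj' : j < n := Finset.mem_range.mp hj
        have h2 : δ ^ (n - 1 - j) * d ^ j ≤ δ ^ (n-1-j) * δ ^ j :=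
          Nat.mul_le_mul_left _ (Nat.pow_le_pow_left h j)
        calc δ ^ (n - 1 - j) * d ^ j * γ ≤ δ ^ (n-1-j) * δ ^ j * γ := Nat.mul_le_mul_right _ h2
          _ = δ ^ (n-1-j+j) * γ := by rw [pow_add]
          _ ≤ δ ^ (n-1) * γ := Nat.mul_le_mul_right _ (Nat.pow_le_pow_right h1 (by omega))
    _ = n * δ^(n-1) * γ := by rw [Finset.sum_const, Finset.card_range]; ring

lemma alg2 (A B δc dc γc gn x1 y1 x2 y2 : ℂ) (hδ : δc ≠ 0) (hd : dc ≠ 0)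
    (hA : A ≠ 0) (hB : B ≠ 0) :
    y2 / (B * dc) - (dc * gn + A * γc) * x2 / ((A * δc) * (B * dc))
        - (y1 / B - gn * x1 / (A * B)) =
      (y2 - (γc * x1 + dc * y1)) / (B * dc)
        - (dc * gn + A * γc) * (x2 - δc * x1) / ((A * δc) * (B * dc)) := by
  rw [div_sub_div _ _ (mul_ne_zero hB hd) (mul_ne_zero (mul_ne_zero hA hδ) (mul_ne_zero hB hd)),
      div_sub_div _ _ (mul_ne_zero hB hd) (mul_ne_zero (mul_ne_zero hA hδ) (mul_ne_zero hB hd)),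
      div_sub_div _ _ hB (mul_ne_zero hA hB)]
  rw [div_sub_div _ _ (mul_ne_zero (mul_ne_zero hB hd) (mul_ne_zero (mul_ne_zero hA hδ) (mul_ne_zero hB hd)))
      (mul_ne_zero hB (mul_ne_zero hA hB))]
  rw [div_eq_div_iff (by simp [hA, hB, hδ, hd]) (by simp [hA, hB, hδ, hd])]
  ring

lemma Phi_succ_sub (δ d γ : ℕ) (hd : 1 ≤ d) (hδ : 1 ≤ δ) (F : ℂ × ℂ → ℂ × ℂ)
    (n : ℕ) (p : ℂ × ℂ) :
    Phi δ d γ F (n+1) p - Phi δ d γ F n p =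
      (((F (F^[n] p)).1 - (δ:ℂ) * (F^[n] p).1) / (δ:ℂ)^(n+1),
       ((F (F^[n] p)).2 - ((γ:ℂ) * (F^[n] p).1 + (d:ℂ) * (F^[n] p).2)) / (d:ℂ)^(n+1)
         - (gammaSeq δ d γ (n+1) : ℂ) * ((F (F^[n] p)).1 - (δ:ℂ) * (F^[n] p).1)
             / ((δ:ℂ)^(n+1) * (d:ℂ)^(n+1))) := by
  have hδ0 : (δ:ℂ) ≠ 0 := Nat.cast_ne_zero.mpr (by omega)
  have hd0 : (d:ℂ) ≠ 0 := Nat.cast_ne_zero.mpr (by omega)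
  have hA : (δ:ℂ)^n ≠ 0 := pow_ne_zero _ hδ0
  have hB : (d:ℂ)^n ≠ 0 := pow_ne_zero _ hd0
  have hrec : (gammaSeq δ d γ (n+1) : ℂ) =
      (d:ℂ) * (gammaSeq δ d γ n : ℂ) + (δ:ℂ)^n * (γ:ℂ) := by
    have := gammaSeq_succ δ d γ n
    push_cast [this]
    ring
  simp only [Phi, Function.iterate_succ_apply', Prod.mk_sub_mk]
  refine Prod.ext ?_ ?_
  · simp only
    field_simp
    ring
  · simp only [hrec, pow_succ]
    exact alg2 ((δ:ℂ)^n) ((d:ℂ)^n) (δ:ℂ) (d:ℂ) (γ:ℂ) ((gammaSeq δ d γ n : ℂ))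
      (F^[n] p).1 (F^[n] p).2 (F (F^[n] p)).1 (F (F^[n] p)).2 hδ0 hd0 hA hB

theorem stmt17 (δ d γ : ℕ) (hd : 1 ≤ d) (hδd : d < δ)
    (S : Set (ℂ × ℂ)) (F : ℂ × ℂ → ℂ × ℂ) (hInv : Set.MapsTo F S S)
    (ε : ℝ) (hε : 0 < ε)
    (hF : ∀ p ∈ S, ‖F p - ((δ : ℂ) * p.1, (γ : ℂ) * p.1 + (d : ℂ) * p.2)‖ < ε) :
    (∀ n : ℕ, ∀ p ∈ S,
      ‖Phi δ d γ F (n + 1) p - Phi δ d γ F n p‖ ≤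
        max (ε / (δ : ℝ) ^ (n + 1))
          (ε / (d : ℝ) ^ (n + 1) +
            (gammaSeq δ d γ (n + 1) : ℝ) * ε / ((δ : ℝ) ^ (n + 1) * (d : ℝ) ^ (n + 1)))) ∧
    (2 ≤ d → UniformCauchySeqOn (fun n => Phi δ d γ F n) Filter.atTop S) := by
  have hδ1 : 1 ≤ δ := by omega
  have hδR : (0:ℝ) < (δ:ℝ) := by exact_mod_cast Nat.pos_of_ne_zero (by omega)
  have hdR : (0:ℝ) < (d:ℝ) := by exact_mod_cast Nat.pos_of_ne_zero (by omega)
  have part1 : ∀ n : ℕ, ∀ p ∈ S,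
      ‖Phi δ d γ F (n + 1) p - Phi δ d γ F n p‖ ≤
        max (ε / (δ : ℝ) ^ (n + 1))
          (ε / (d : ℝ) ^ (n + 1) +
            (gammaSeq δ d γ (n + 1) : ℝ) * ε / ((δ : ℝ) ^ (n + 1) * (d : ℝ) ^ (n + 1))) := by
    intro n p hp
    have hq : F^[n] p ∈ S := hInv.iterate n hp
    have hG := (hF _ hq).le
    have hG1 : ‖(F (F^[n] p)).1 - (δ:ℂ) * (F^[n] p).1‖ ≤ ε := by
      refine le_trans ?_ hG
      have := norm_fst_le (F (F^[n] p) -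
        ((δ:ℂ) * (F^[n] p).1, (γ:ℂ) * (F^[n] p).1 + (d:ℂ) * (F^[n] p).2))
      simpa using this
    have hG2 : ‖(F (F^[n] p)).2 - ((γ:ℂ) * (F^[n] p).1 + (d:ℂ) * (F^[n] p).2)‖ ≤ ε := by
      refine le_trans ?_ hG
      have := norm_snd_le (F (F^[n] p) -
        ((δ:ℂ) * (F^[n] p).1, (γ:ℂ) * (F^[n] p).1 + (d:ℂ) * (F^[n] p).2))
      simpa using this
    rw [Phi_succ_sub δ d γ hd hδ1 F n p, Prod.norm_def]
    refine max_le_max ?_ ?_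
    · rw [norm_div, norm_pow, Complex.norm_natCast]
      gcongr
    · refine le_trans (norm_sub_le _ _) ?_
      rw [norm_div, norm_pow, Complex.norm_natCast, norm_div, norm_mul,
        norm_mul, norm_pow, norm_pow, Complex.norm_natCast, Complex.norm_natCast,
        Complex.norm_natCast]
      gcongr
  refine ⟨part1, fun hd2 => ?_⟩
  have hδ2 : (2:ℝ) ≤ (δ:ℝ) := by exact_mod_cast (by omega : 2 ≤ δ)
  have hd2R : (2:ℝ) ≤ (d:ℝ) := by exact_mod_cast hd2
  set u : ℕ → ℝ := fun n => (1 + (γ:ℝ)) * (n + 1) * ε / 2 ^ (n + 1) with hu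
  have hbound : ∀ n : ℕ, ∀ x ∈ S, ‖Phi δ d γ F (n+1) x - Phi δ d γ F n x‖ ≤ u n := by
    intro n x hx
    refine le_trans (part1 n x hx) (max_le ?_ ?_)
    · calc ε / (δ:ℝ) ^ (n+1) ≤ ε / 2 ^ (n+1) := by gcongr <;> linarith
        _ ≤ u n := by
            rw [hu]
            rw [div_le_div_iff_of_pos_right (by positivity)]
            nlinarith [mul_nonneg (Nat.cast_nonneg (α := ℝ) γ) hε.le, mul_nonneg (Nat.cast_nonneg (α := ℝ) n) hε.le, mul_nonneg (mul_nonneg (Nat.cast_nonneg (α := ℝ) γ) (Nat.cast_nonneg (α := ℝ) n)) hε.le]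
    · have hg1 : (gammaSeq δ d γ (n+1) : ℝ) ≤ (n+1) * (δ:ℝ)^n * γ := by
        have := gammaSeq_le δ d γ (n+1) hδd.le hδ1
        have h2 : ((gammaSeq δ d γ (n+1) : ℕ) : ℝ) ≤ (((n+1) * δ^n * γ : ℕ) : ℝ) := by
          exact_mod_cast (by simpa using this)
        push_cast at h2
        linarith
      have hδn : (δ:ℝ)^n ≠ 0 := ne_of_gt (pow_pos hδR _)
      have hdn1 : (d:ℝ)^(n+1) ≠ 0 := ne_of_gt (pow_pos hdR _)
      calc ε / (d:ℝ) ^ (n+1) +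
            (gammaSeq δ d γ (n+1) : ℝ) * ε / ((δ:ℝ)^(n+1) * (d:ℝ)^(n+1))
          ≤ ε / 2 ^ (n+1) + ((n+1) * (δ:ℝ)^n * γ) * ε / ((δ:ℝ)^(n+1) * (d:ℝ)^(n+1)) := by
            gcongr <;> first
              | linarith
              | exact mul_pos (pow_pos hδR _) (pow_pos hdR _)
        _ = ε / 2 ^ (n+1) + ((n+1) * (γ:ℝ)) * ε / ((δ:ℝ) * (d:ℝ)^(n+1)) := by
            rw [pow_succ]
            field_simp
            ring
        _ ≤ ε / 2 ^ (n+1) + ((n+1) * (γ:ℝ)) * ε / (1 * 2 ^ (n+1)) := by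
            have hnum : (0:ℝ) ≤ ((n:ℝ)+1) * (γ:ℝ) * ε := by positivity
            have hden : (0:ℝ) < 1 * 2 ^ (n+1) := by positivity
            have hle : (1:ℝ) * 2 ^ (n+1) ≤ (δ:ℝ) * (d:ℝ)^(n+1) := by
              rw [one_mul]
              calc (2:ℝ) ^ (n+1) ≤ (d:ℝ)^(n+1) := by gcongr <;> linarith
                _ ≤ (δ:ℝ) * (d:ℝ)^(n+1) := by nlinarith [pow_pos hdR (n+1)]
            gcongr
        _ ≤ u n := by
            rw [hu, one_mul, ← add_div]
            rw [div_le_div_iff_of_pos_right (by positivity)]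
            nlinarith [mul_nonneg (Nat.cast_nonneg (α := ℝ) γ) hε.le, mul_nonneg (Nat.cast_nonneg (α := ℝ) n) hε.le, mul_nonneg (mul_nonneg (Nat.cast_nonneg (α := ℝ) γ) (Nat.cast_nonneg (α := ℝ) n)) hε.le]
  have hsum : Summable u := by
    have h0 : Summable (fun n : ℕ => (n:ℝ)^1 * (1/2:ℝ)^n) :=
      summable_pow_mul_geometric_of_norm_lt_one 1
        (by rw [Real.norm_eq_abs, abs_of_pos] <;> norm_num)
    have h1 : Summable (fun n : ℕ => ((n:ℝ)+1)^1 * (1/2:ℝ)^(n+1)) := by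
      have := (summable_nat_add_iff 1).mpr h0
      convert this using 2 with n
      · rfl
      push_cast
      ring
    have h2 := h1.mul_left ((1 + (γ:ℝ)) * ε)
    refine h2.congr fun n => ?_
    rw [hu]
    simp only [pow_one, one_div]
    rw [div_eq_mul_inv, ← inv_pow]
    ring
  have hWeier := tendstoUniformlyOn_tsum_nat hsum
    (f := fun n x => Phi δ d γ F (n+1) x - Phi δ d γ F n x) (s := S)
    (fun n x hx => hbound n x hx)
  have hUC := hWeier.uniformCauchySeqOn
  have heq : (fun (N : ℕ) (x : ℂ × ℂ) =>
      ∑ n ∈ Finset.range N, (Phi δ d γ F (n+1) x - Phi δ d γ F n x)) =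
      fun N x => Phi δ d γ F N x - Phi δ d γ F 0 x := by
    funext N x
    exact Finset.sum_range_sub (fun k => Phi δ d γ F k x) N
  rw [heq] at hUC
  rw [Metric.uniformCauchySeqOn_iff] at hUC ⊢
  intro ε' hε'
  obtain ⟨N, hN⟩ := hUC ε' hε'
  refine ⟨N, fun m hm n hn x hx => ?_⟩
  have := hN m hm n hn x hx
  rwa [dist_sub_right] at this
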